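/- Suppose there exist s > 0, a positive integer m, and a probability measure μ such that the systematic scan Gibbs sampler kernel P = P_1 P_2 ⋯ P_d satisfies P^m(x,·) ≥ s μ(·) for all x ∈ X. Then the uniform random scan kernel P_{1/d} = (1/d) Σ_{i=1}^d P_i satisfies P_{1/d}^{md}(x,·) ≥ (1/d)^{md} s μ(·) for all x ∈ X. -/

import Mathlib

open ProbabilityTheory MeasureTheory Finset
open scoped ENNReal

/-- `kiter P n` is the `n`-step kernel `P^n`. -/
noncomputable def kiter {X : Type*} [MeasurableSpace X] (P : Kernel X X) : ℕ → Kernel X X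
  | 0 => Kernel.id
  | n + 1 => P ∘ₖ kiter P n

section aux
variable {X : Type*} [MeasurableSpace X]

/-- Kernel domination up to a constant, as measures. -/
def MLe (c : ℝ≥0∞) (Q R : Kernel X X) : Prop := ∀ x, c • (Q x) ≤ R x

lemma mle_iff {c : ℝ≥0∞} {Q R : Kernel X X} :
    MLe c Q R ↔ ∀ x, ∀ A : Set X, MeasurableSet A → c * Q x A ≤ R x A := by
  unfold MLe
  constructor
  · intro h x A hA
    simpa [Measure.smul_apply] using Measure.le_iff.mp (h x) A hA
  · intro h x
    refine Measure.le_iff.mpr fun A hA => ?_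
    simpa [Measure.smul_apply] using h x A hA

lemma mle_comp {c₁ c₂ : ℝ≥0∞} {Q₁ Q₂ R₁ R₂ : Kernel X X}
    (h₁ : MLe c₁ Q₁ R₁) (h₂ : MLe c₂ Q₂ R₂) :
    MLe (c₁ * c₂) (Q₁ ∘ₖ Q₂) (R₁ ∘ₖ R₂) := by
  rw [mle_iff] at *
  intro x A hA
  rw [Kernel.comp_apply' _ _ _ hA, Kernel.comp_apply' _ _ _ hA]
  calc c₁ * c₂ * ∫⁻ y, Q₁ y A ∂(Q₂ x)
      = c₂ * ∫⁻ y, c₁ * Q₁ y A ∂(Q₂ x) := by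
        rw [lintegral_const_mul _ (Kernel.measurable_coe _ hA)]; ring
    _ ≤ c₂ * ∫⁻ y, R₁ y A ∂(Q₂ x) := by
        gcongr with y
        exact h₁ y A hA
    _ = ∫⁻ y, R₁ y A ∂(c₂ • Q₂ x) := by rw [lintegral_smul_measure, smul_eq_mul]
    _ ≤ ∫⁻ y, R₁ y A ∂(R₂ x) := by
        refine lintegral_mono' ?_ le_rfl
        exact Measure.le_iff.mpr fun B hB => by
          simpa [Measure.smul_apply] using h₂ x B hB

instance kiter_markov (R : Kernel X X) [IsMarkovKernel R] (n : ℕ) :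
    IsMarkovKernel (kiter R n) := by
  induction n with
  | zero => unfold kiter; infer_instance
  | succ n ih => unfold kiter; infer_instance

lemma kiter_add (R : Kernel X X) [IsSFiniteKernel R] (a b : ℕ) :
    kiter R (a + b) = kiter R a ∘ₖ kiter R b := by
  induction a with
  | zero => simp [kiter, Kernel.id_comp]
  | succ n ih =>
    have h : n + 1 + b = (n + b) + 1 := by ring
    rw [h]
    show R ∘ₖ kiter R (n + b) = (R ∘ₖ kiter R n) ∘ₖ kiter R b
    rw [ih, Kernel.comp_assoc]

/-- Fold composition of a list of kernels. -/
noncomputable def compList (L : List (Kernel X X)) : Kernel X X :=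
  L.foldl (fun acc Pi => Pi ∘ₖ acc) Kernel.id

lemma foldl_markov (L : List (Kernel X X)) (hL : ∀ K ∈ L, IsMarkovKernel K)
    (k : Kernel X X) (hk : IsMarkovKernel k) :
    IsMarkovKernel (L.foldl (fun acc Pi => Pi ∘ₖ acc) k) := by
  induction L generalizing k with
  | nil => simpa
  | cons K L ih =>
    haveI : IsMarkovKernel K := hL K (by simp)
    exact ih (fun K' h => hL K' (by simp [h])) (K ∘ₖ k) (by infer_instance)

lemma compList_markov (L : List (Kernel X X)) (hL : ∀ K ∈ L, IsMarkovKernel K) :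
    IsMarkovKernel (compList L) :=
  foldl_markov L hL Kernel.id (by unfold Kernel.id; infer_instance)

lemma foldl_comp_eq (L : List (Kernel X X)) (hL : ∀ K ∈ L, IsMarkovKernel K)
    (k : Kernel X X) :
    L.foldl (fun acc Pi => Pi ∘ₖ acc) k = compList L ∘ₖ k := by
  induction L generalizing k with
  | nil => simp [compList, Kernel.id_comp]
  | cons K L ih =>
    haveI hK : IsMarkovKernel K := hL K (by simp)
    have hL' : ∀ K' ∈ L, IsMarkovKernel K' := fun K' h => hL K' (by simp [h])
    haveI := compList_markov L hL'
    simp only [List.foldl_cons, compList]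
    rw [ih hL' (K ∘ₖ k), ih hL' (K ∘ₖ Kernel.id)]
    rw [Kernel.comp_id, ← Kernel.comp_assoc]

lemma compList_cons (K : Kernel X X) (L : List (Kernel X X))
    (hL : ∀ K' ∈ L, IsMarkovKernel K') :
    compList (K :: L) = compList L ∘ₖ K := by
  show List.foldl _ (K ∘ₖ Kernel.id) L = _
  rw [foldl_comp_eq L hL (K ∘ₖ Kernel.id), Kernel.comp_id]

lemma mle_compList {c : ℝ≥0∞} {R : Kernel X X} [IsMarkovKernel R]
    (L : List (Kernel X X)) (hL : ∀ K ∈ L, IsMarkovKernel K)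
    (hdom : ∀ K ∈ L, MLe c K R) :
    MLe (c ^ L.length) (compList L) (kiter R L.length) := by
  induction L with
  | nil =>
    intro x
    simp [compList, kiter]
  | cons K L ih =>
    haveI hK : IsMarkovKernel K := hL K (by simp)
    have hL' : ∀ K' ∈ L, IsMarkovKernel K' := fun K' h => hL K' (by simp [h])
    have hdom' : ∀ K' ∈ L, MLe c K' R := fun K' h => hdom K' (by simp [h])
    have hkit : kiter R (L.length + 1) = kiter R L.length ∘ₖ R := by
      have := kiter_add R L.length 1
      simp only [kiter, Kernel.comp_id] at this ⊢
      rw [this]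
    rw [List.length_cons, compList_cons K L hL', hkit, pow_succ]
    exact mle_comp (ih hL' hdom') (hdom K (by simp))

end aux

/-- A minorization for the systematic scan Gibbs sampler `P = P₁P₂⋯P_d` transfers to
the uniform random scan sampler `P_{1/d} = (1/d) Σᵢ Pᵢ`:
`P_{1/d}^{md}(x,·) ≥ (1/d)^{md} s μ(·)`. -/
theorem random_scan_minorization_from_systematic {X : Type*} [MeasurableSpace X]
    (d : ℕ) (hd : 0 < d)
    (P : Fin d → Kernel X X) (hP : ∀ i, IsMarkovKernel (P i))
    (Psys : Kernel X X)
    (hPsys : Psys = (List.ofFn P).foldl (fun acc Pi => Pi ∘ₖ acc) Kernel.id)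
    (Prand : Kernel X X) [IsMarkovKernel Prand]
    (hPrand : ∀ x : X, Prand x = ((d : ℝ≥0∞))⁻¹ • ∑ i, P i x)
    (s : ℝ) (hs : 0 < s) (m : ℕ) (hm : 0 < m)
    (μ : Measure X) [IsProbabilityMeasure μ]
    (hminor : ∀ x : X, ∀ A : Set X, MeasurableSet A →
      ENNReal.ofReal s * μ A ≤ kiter Psys m x A) :
    ∀ x : X, ∀ A : Set X, MeasurableSet A →
      ((d : ℝ≥0∞))⁻¹ ^ (m * d) * (ENNReal.ofReal s * μ A)
        ≤ kiter Prand (m * d) x A := by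
  haveI := hP
  -- each Pᵢ is dominated by d • Prand
  have hdom : ∀ K ∈ List.ofFn P, MLe ((d : ℝ≥0∞))⁻¹ K Prand := by
    intro K hK
    obtain ⟨i, rfl⟩ := List.mem_ofFn.mp hK
    rw [mle_iff]
    intro x A hA
    rw [hPrand x, Measure.smul_apply, Measure.finset_sum_apply]
    rw [smul_eq_mul]
    gcongr
    exact Finset.single_le_sum (f := fun j => P j x A) (fun j _ => zero_le)
      (Finset.mem_univ i)
  have hLmk : ∀ K ∈ List.ofFn P, IsMarkovKernel K := by
    intro K hK; obtain ⟨i, rfl⟩ := List.mem_ofFn.mp hK; exact hP i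
  -- Psys = compList (List.ofFn P), dominated with constant (1/d)^d
  have hsys : MLe (((d : ℝ≥0∞))⁻¹ ^ d) Psys (kiter Prand d) := by
    have := mle_compList (R := Prand) (List.ofFn P) hLmk hdom
    simpa [hPsys, compList, List.length_ofFn] using this
  -- iterate m times
  have hiter : ∀ n : ℕ, MLe ((((d : ℝ≥0∞))⁻¹ ^ d) ^ n) (kiter Psys n) (kiter Prand (n * d)) := by
    intro n
    induction n with
    | zero =>
      intro x; simp [kiter]
    | succ n ih =>
      have hlen : (n + 1) * d = d + n * d := by ring
      rw [hlen, kiter_add Prand d (n*d)]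
      show MLe _ (Psys ∘ₖ kiter Psys n) _
      rw [pow_succ, mul_comm]
      exact mle_comp hsys ih
  intro x A hA
  have := (mle_iff.mp (hiter m)) x A hA
  calc ((d : ℝ≥0∞))⁻¹ ^ (m * d) * (ENNReal.ofReal s * μ A)
      = (((d : ℝ≥0∞))⁻¹ ^ d) ^ m * (ENNReal.ofReal s * μ A) := by
        rw [← pow_mul, mul_comm d m]
    _ ≤ (((d : ℝ≥0∞))⁻¹ ^ d) ^ m * kiter Psys m x A := by
        gcongr
        exact hminor x A hA
    _ ≤ kiter Prand (m * d) x A := this
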